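/- arXiv:2006.11954 — 5 statements merged into one kernel-verified Lean document; each statement's English description precedes it below -/
import Mathlib

section
/- Let X be a Banach space and (x_n*) a semi-normalized sequence in the dual X* that converges to 0 in the weak* topology. Then there exists a subsequence (y_n*) of (x_n*) and a bounded sequence (y_n) in X such that y_i*(y_j) = δ_{ij} for all i, j ≥ 1 (i.e., y_i*(y_j) = 1 if i = j and 0 otherwise). -/
open Filter Metric


noncomputable def jrC (A : ℕ → ℕ → ℂ) : ℕ → ℕ → ℂ
  | i, j =>
    if i = j then 1
    else if i < j then 0
    else -∑ k : Fin i, A i k * jrC A k j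
  termination_by i _ => i
  decreasing_by exact k.isLt

theorem jrC_diag (A : ℕ → ℕ → ℂ) (i : ℕ) : jrC A i i = 1 := by
  rw [jrC]; simp

theorem jrC_upper (A : ℕ → ℕ → ℂ) {i j : ℕ} (h : i < j) : jrC A i j = 0 := by
  rw [jrC]; simp [Nat.ne_of_lt h, h]

theorem jrC_lower (A : ℕ → ℕ → ℂ) {i j : ℕ} (h : j < i) :
    jrC A i j = -∑ k : Fin i, A i k * jrC A (k : ℕ) j := by
  rw [jrC]
  simp [Nat.ne_of_gt h, Nat.lt_asymm h]

theorem jr_pow_aux (i : ℕ) : (i : ℝ) * ((4:ℝ)⁻¹ ^ i / 4) ≤ (2:ℝ)⁻¹ ^ i := by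
  have h1 : (i : ℝ) ≤ 2 ^ i := by
    exact_mod_cast (show i < 2 ^ i from Nat.lt_two_pow_self).le
  have h2 : (0:ℝ) < 2⁻¹ ^ i := by positivity
  have h4 : (4:ℝ)⁻¹ ^ i = (2:ℝ)⁻¹ ^ i * (2:ℝ)⁻¹ ^ i := by
    rw [← mul_pow]; norm_num
  have h5 : (2:ℝ) ^ i * (2:ℝ)⁻¹ ^ i = 1 := by
    rw [← mul_pow]; norm_num
  nlinarith [h2.le, pow_pos (by norm_num : (0:ℝ) < 2) i]

theorem jrC_bound (A : ℕ → ℕ → ℂ)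
    (hsm : ∀ i k, k < i → ‖A i k‖ ≤ (4:ℝ)⁻¹ ^ i / 4) :
    ∀ i j, ‖jrC A i j‖ ≤ 1 := by
  intro i
  induction i using Nat.strong_induction_on with
  | _ i ih =>
    intro j
    rcases lt_trichotomy i j with h | rfl | h
    · rw [jrC_upper A h]; norm_num
    · rw [jrC_diag]; norm_num
    · rw [jrC_lower A h, norm_neg]
      calc ‖∑ k : Fin i, A i k * jrC A (k : ℕ) j‖
          ≤ ∑ k : Fin i, ‖A i k * jrC A (k : ℕ) j‖ := norm_sum_le _ _
        _ ≤ ∑ _k : Fin i, (4:ℝ)⁻¹ ^ i / 4 := by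
            refine Finset.sum_le_sum fun k _ => ?_
            rw [norm_mul]
            calc ‖A i (k:ℕ)‖ * ‖jrC A (k : ℕ) j‖ ≤ ((4:ℝ)⁻¹ ^ i / 4) * 1 :=
                  mul_le_mul (hsm i k k.isLt) (ih k k.isLt j) (norm_nonneg _) (by positivity)
              _ = (4:ℝ)⁻¹ ^ i / 4 := mul_one _
        _ = (i : ℝ) * ((4:ℝ)⁻¹ ^ i / 4) := by
            rw [Finset.sum_const, Finset.card_univ, Fintype.card_fin, nsmul_eq_mul]
        _ ≤ (2:ℝ)⁻¹ ^ i := jr_pow_aux i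
        _ ≤ 1 := by
            apply pow_le_one₀ <;> norm_num

theorem jrC_bound' (A : ℕ → ℕ → ℂ)
    (hsm : ∀ i k, k < i → ‖A i k‖ ≤ (4:ℝ)⁻¹ ^ i / 4) :
    ∀ i j, i ≠ j → ‖jrC A i j‖ ≤ (2:ℝ)⁻¹ ^ i := by
  intro i j hne
  rcases lt_or_gt_of_ne hne with h | h
  · rw [jrC_upper A h, norm_zero]; positivity
  · rw [jrC_lower A h, norm_neg]
    calc ‖∑ k : Fin i, A i k * jrC A (k : ℕ) j‖
        ≤ ∑ k : Fin i, ‖A i k * jrC A (k : ℕ) j‖ := norm_sum_le _ _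
      _ ≤ ∑ _k : Fin i, (4:ℝ)⁻¹ ^ i / 4 := by
          refine Finset.sum_le_sum fun k _ => ?_
          rw [norm_mul]
          calc ‖A i (k:ℕ)‖ * ‖jrC A (k : ℕ) j‖ ≤ ((4:ℝ)⁻¹ ^ i / 4) * 1 :=
                mul_le_mul (hsm i k k.isLt) (jrC_bound A hsm k j) (norm_nonneg _) (by positivity)
            _ = (4:ℝ)⁻¹ ^ i / 4 := mul_one _
      _ = (i : ℝ) * ((4:ℝ)⁻¹ ^ i / 4) := by
          rw [Finset.sum_const, Finset.card_univ, Fintype.card_fin, nsmul_eq_mul]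
      _ ≤ (2:ℝ)⁻¹ ^ i := jr_pow_aux i

theorem jrC_sum (A : ℕ → ℕ → ℂ) (hd : ∀ i, A i i = 1) :
    ∀ i j, ∑ k ∈ Finset.range (i + 1), A i k * jrC A k j = if i = j then 1 else 0 := by
  intro i j
  rcases lt_trichotomy i j with h | rfl | h
  · rw [if_neg (Nat.ne_of_lt h)]
    refine Finset.sum_eq_zero fun k hk => ?_
    have hk' : k < j := lt_of_lt_of_le (Finset.mem_range.1 hk) h
    rw [jrC_upper A hk', mul_zero]
  · rw [if_pos rfl, Finset.sum_range_succ, jrC_diag, hd, mul_one]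
    have : ∑ k ∈ Finset.range i, A i k * jrC A k i = 0 :=
      Finset.sum_eq_zero fun k hk => by
        rw [jrC_upper A (Finset.mem_range.1 hk), mul_zero]
    rw [this, zero_add]
  · rw [if_neg (Nat.ne_of_gt h), Finset.sum_range_succ, hd, one_mul, jrC_lower A h,
      ← Fin.sum_univ_eq_sum_range (fun k => A i k * jrC A k j) i]
    ring


section JR
variable {X : Type*} [NormedAddCommGroup X] [NormedSpace ℂ X]

set_option maxHeartbeats 1600000 in
theorem jr_keyStep (x : ℕ → StrongDual ℂ X) {a b : ℝ} (ha : 0 < a)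
    (hlow : ∀ n, a ≤ ‖x n‖) (hb : ∀ n, ‖x n‖ ≤ b)
    (hnull : ∀ v : X, Tendsto (fun n => x n v) atTop (nhds 0))
    (m q : ℕ) (G : Finset ℕ) (v : ℕ → X) (ε : ℝ) (hε : 0 < ε) :
    ∃ p : ℕ × X, m < p.1 ∧ x p.1 p.2 = 1 ∧ ‖p.2‖ ≤ 5 / a ∧
      (∀ l ∈ G, x l p.2 = 0) ∧ ∀ k, k < q → ‖x p.1 (v k)‖ ≤ ε := by
  classical
  set F : Submodule ℂ (StrongDual ℂ X) := Submodule.span ℂ (x '' ↑G) with hF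
  haveI hFD : FiniteDimensional ℂ ↥F :=
    FiniteDimensional.span_of_finite ℂ (G.finite_toSet.image x)
  -- Step A : eventually the distance from `x n` to `F` is at least `a/4`.
  have hev : ∀ᶠ n in atTop, a / 4 ≤ infDist (x n) ↑F := by
    by_contra hc
    rw [not_eventually] at hc
    have hc' : ∃ᶠ n in atTop, infDist (x n) (↑F : Set (StrongDual ℂ X)) < a / 4 := by
      refine hc.mono fun n hn => ?_
      linarith [not_le.mp hn]
    obtain ⟨ψ, hψ, hψP⟩ := extraction_of_frequently_atTop hc'
    have hne : (↑F : Set (StrongDual ℂ X)).Nonempty := ⟨0, F.zero_mem⟩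
    choose g hgF hgd using fun k => (infDist_lt_iff hne).1 (hψP k)
    set R : ℝ := b + a / 4 with hR
    have hgball : ∀ k, (⟨g k, hgF k⟩ : F) ∈ closedBall (0 : F) R := by
      intro k
      refine (mem_closedBall_zero_iff (E := ↥F)).2 ?_
      show ‖g k‖ ≤ R
      have h1 : ‖g k - x (ψ k)‖ ≤ a / 4 := by
        rw [← dist_eq_norm']
        exact (hgd k).le
      have h2 : ‖g k‖ - ‖x (ψ k)‖ ≤ ‖g k - x (ψ k)‖ := norm_sub_norm_le _ _
      have h3 := hb (ψ k)
      simp only [hR]; linarith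
    obtain ⟨glim, hglimmem, ρ, hρ, hconv⟩ :=
      (isCompact_closedBall (0 : F) R).tendsto_subseq hgball
    have hconv' : Tendsto (fun l => g (ρ l)) atTop (nhds (glim : StrongDual ℂ X)) :=
      ((continuous_subtype_val.tendsto glim).comp hconv)
    have h1 : ∀ w : X, ‖(glim : StrongDual ℂ X) w‖ ≤ a / 4 * ‖w‖ := by
      intro w
      have hx0 : Tendsto (fun l => x (ψ (ρ l)) w) atTop (nhds 0) :=
        (hnull w).comp ((hψ.comp hρ).tendsto_atTop)
      have hgw : Tendsto (fun l => g (ρ l) w) atTop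
          (nhds ((glim : StrongDual ℂ X) w)) :=
        ((ContinuousLinearMap.apply ℂ ℂ w).continuous.tendsto _).comp hconv'
      have hdiff := (hx0.sub hgw).norm
      have : ‖(0 : ℂ) - (glim : StrongDual ℂ X) w‖ ≤ a / 4 * ‖w‖ := by
        refine le_of_tendsto hdiff ?_
        filter_upwards with l
        have e1 : x (ψ (ρ l)) w - g (ρ l) w = (x (ψ (ρ l)) - g (ρ l)) w := by simp
        rw [e1]
        calc ‖(x (ψ (ρ l)) - g (ρ l)) w‖ ≤ ‖x (ψ (ρ l)) - g (ρ l)‖ * ‖w‖ :=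
              ContinuousLinearMap.le_opNorm _ _
          _ ≤ a / 4 * ‖w‖ := by
              have : ‖x (ψ (ρ l)) - g (ρ l)‖ ≤ a / 4 := by
                rw [← dist_eq_norm]; exact (hgd (ρ l)).le
              exact mul_le_mul_of_nonneg_right this (norm_nonneg w)
      simpa using this
    have hle : ‖(glim : StrongDual ℂ X)‖ ≤ a / 4 :=
      ContinuousLinearMap.opNorm_le_bound _ (by positivity) h1
    have hge : 3 * a / 4 ≤ ‖(glim : StrongDual ℂ X)‖ := by
      refine ge_of_tendsto hconv'.norm ?_
      filter_upwards with l
      have h2 := hlow (ψ (ρ l))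
      have h3 : ‖x (ψ (ρ l))‖ - ‖g (ρ l)‖ ≤ ‖x (ψ (ρ l)) - g (ρ l)‖ := norm_sub_norm_le _ _
      have h4 : ‖x (ψ (ρ l)) - g (ρ l)‖ ≤ a / 4 := by
        rw [← dist_eq_norm]; exact (hgd (ρ l)).le
      linarith
    linarith
  -- Step B : eventually all the `v k` are small.
  have hev2 : ∀ᶠ n in atTop, ∀ k ∈ Finset.range q, ‖x n (v k)‖ ≤ ε := by
    rw [Filter.eventually_all_finset]
    intro k _
    have h0 : Tendsto (fun n => ‖x n (v k)‖) atTop (nhds 0) := by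
      simpa using (hnull (v k)).norm
    exact h0.eventually_le_const hε
  obtain ⟨n, hn1, hn2, hn3⟩ := (hev.and (hev2.and (eventually_gt_atTop m))).exists
  -- Step C : find the vector `u` in the intersection of kernels.
  set N : Submodule ℂ X := ⨅ l ∈ G, LinearMap.ker (x l : X →ₗ[ℂ] ℂ) with hN
  set f : ↥N →L[ℂ] ℂ := (x n).comp N.subtypeL with hf
  obtain ⟨g, hg_eq, hg_norm⟩ := exists_extension_norm_eq N f
  have hker : ∀ z ∈ N, (x n - g) z = 0 := by
    intro z hz
    have : g z = f ⟨z, hz⟩ := hg_eq ⟨z, hz⟩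
    simp only [ContinuousLinearMap.sub_apply, this, hf, ContinuousLinearMap.comp_apply,
      Submodule.subtypeL_apply, sub_self]
  have hsub : (⨅ l : ↥G, LinearMap.ker ((x l : X →L[ℂ] ℂ) : X →ₗ[ℂ] ℂ)) ≤
      LinearMap.ker (((x n - g : X →L[ℂ] ℂ) : X →ₗ[ℂ] ℂ)) := by
    intro z hz
    rw [LinearMap.mem_ker]
    have hzN : z ∈ N := by
      rw [hN, Submodule.mem_iInf]
      intro l
      rw [Submodule.mem_iInf]
      intro hl
      exact (Submodule.mem_iInf _).1 hz ⟨l, hl⟩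
    exact hker z hzN
  have hmem := mem_span_of_iInf_ker_le_ker hsub
  have hmem2 : ((x n - g : X →L[ℂ] ℂ) : X →ₗ[ℂ] ℂ) ∈
      Submodule.map (ContinuousLinearMap.coeLM ℂ) F := by
    rw [hF, Submodule.map_span]
    refine Submodule.span_mono ?_ hmem
    rintro _ ⟨l, rfl⟩
    exact ⟨x l, ⟨l, l.2, rfl⟩, rfl⟩
  obtain ⟨h', hh'F, hh'⟩ := hmem2
  have hEq : h' = x n - g := ContinuousLinearMap.coe_injective hh'
  have hdist : infDist (x n) ↑F ≤ ‖f‖ := by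
    rw [← hg_norm]
    have hd : dist (x n) h' = ‖g‖ := by
      rw [dist_eq_norm, hEq]
      congr 1
      abel
    calc infDist (x n) ↑F ≤ dist (x n) h' := infDist_le_dist_of_mem hh'F
      _ = ‖g‖ := hd
  have hfnorm : a / 4 ≤ ‖f‖ := hn1.trans hdist
  have hz : ∃ z : ↥N, ¬ (‖f z‖ ≤ a / 5 * ‖z‖) := by
    by_contra hall
    push_neg at hall
    have : ‖f‖ ≤ a / 5 := ContinuousLinearMap.opNorm_le_bound _ (by positivity) hall
    linarith
  obtain ⟨z, hz⟩ := hz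
  rw [not_le] at hz
  have hfz : f z ≠ 0 := by
    intro h0
    rw [h0, norm_zero] at hz
    have h1 : (0:ℝ) ≤ a / 5 * ‖z‖ := mul_nonneg (by positivity) (norm_nonneg z)
    linarith
  have hfzpos : 0 < ‖f z‖ := norm_pos_iff.2 hfz
  refine ⟨(n, (f z)⁻¹ • (z : X)), hn3, ?_, ?_, ?_, fun k hk => hn2 k (Finset.mem_range.2 hk)⟩
  · have : x n (z : X) = f z := by simp [hf]
    rw [map_smul, this, smul_eq_mul, inv_mul_cancel₀ hfz]
  · have hzz : ‖(z : X)‖ = ‖z‖ := rfl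
    have hkey : ‖z‖ ≤ 5 / a * ‖f z‖ := by
      have h1 : (5 / a) * (a / 5 * ‖z‖) ≤ (5 / a) * ‖f z‖ :=
        mul_le_mul_of_nonneg_left hz.le (by positivity)
      have h2 : (5 / a) * (a / 5 * ‖z‖) = ‖z‖ := by
        field_simp
      linarith
    rw [norm_smul, norm_inv]
    calc ‖f z‖⁻¹ * ‖(z : X)‖ ≤ ‖f z‖⁻¹ * (5 / a * ‖f z‖) := by
          rw [hzz]
          exact mul_le_mul_of_nonneg_left hkey (by positivity)
      _ = 5 / a * (‖f z‖⁻¹ * ‖f z‖) := by ring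
      _ = 5 / a := by rw [inv_mul_cancel₀ (ne_of_gt hfzpos), mul_one]
  · intro l hl
    have huN : (f z)⁻¹ • (z : X) ∈ N := N.smul_mem _ z.2
    have : (f z)⁻¹ • (z : X) ∈ LinearMap.ker (x l : X →ₗ[ℂ] ℂ) := by
      have h1 := (Submodule.mem_iInf _).1 huN l
      exact (Submodule.mem_iInf _).1 h1 hl
    exact LinearMap.mem_ker.1 this

end JR


section JR2
variable {X : Type*} [NormedAddCommGroup X] [NormedSpace ℂ X]
variable (x : ℕ → StrongDual ℂ X) {a b : ℝ} (ha : 0 < a)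
  (hlow : ∀ n, a ≤ ‖x n‖) (hb : ∀ n, ‖x n‖ ≤ b)
  (hnull : ∀ v : X, Tendsto (fun n => x n v) atTop (nhds 0))

noncomputable def jrChain : ℕ → ℕ × X
  | j =>
    Classical.choose (jr_keyStep x ha hlow hb hnull
      ((Finset.univ : Finset (Fin j)).sup fun i => (jrChain i).1)
      j
      ((Finset.univ : Finset (Fin j)).image fun i : Fin j => (jrChain i).1)
      (fun k => if h : k < j then (jrChain k).2 else 0)
      ((4:ℝ)⁻¹ ^ j / 4) (by positivity))
  termination_by j => j
  decreasing_by
  all_goals first | exact i.isLt | exact h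

theorem jrChain_spec (j : ℕ) :
    ((Finset.univ : Finset (Fin j)).sup fun i => (jrChain x ha hlow hb hnull i).1) <
        (jrChain x ha hlow hb hnull j).1 ∧
      x (jrChain x ha hlow hb hnull j).1 (jrChain x ha hlow hb hnull j).2 = 1 ∧
      ‖(jrChain x ha hlow hb hnull j).2‖ ≤ 5 / a ∧
      (∀ l ∈ (Finset.univ : Finset (Fin j)).image fun i : Fin j => (jrChain x ha hlow hb hnull i).1,
        x l (jrChain x ha hlow hb hnull j).2 = 0) ∧
      ∀ k, k < j → ‖x (jrChain x ha hlow hb hnull j).1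
        ((fun k => if h : k < j then (jrChain x ha hlow hb hnull k).2 else 0) k)‖ ≤
          (4:ℝ)⁻¹ ^ j / 4 := by
  rw [jrChain]
  exact Classical.choose_spec (jr_keyStep x ha hlow hb hnull
    ((Finset.univ : Finset (Fin j)).sup fun i => (jrChain x ha hlow hb hnull i).1)
    j
    ((Finset.univ : Finset (Fin j)).image fun i : Fin j => (jrChain x ha hlow hb hnull i).1)
    (fun k => if h : k < j then (jrChain x ha hlow hb hnull k).2 else 0)
    ((4:ℝ)⁻¹ ^ j / 4) (by positivity))

end JR2

set_option maxHeartbeats 1600000 in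
/-- **Johnson–Rosenthal.** If `(xₙ*)` is a semi-normalized weak*-null sequence in the
dual of a Banach space `X`, then there is a subsequence `(yₙ*)` and a bounded sequence
`(yₙ)` in `X` with `yᵢ*(yⱼ) = δᵢⱼ`. -/
theorem weak_star_null_biorthogonal_subsequence
    (X : Type*) [NormedAddCommGroup X] [NormedSpace ℂ X] [CompleteSpace X]
    (x : ℕ → StrongDual ℂ X)
    (hlow : ∃ a : ℝ, 0 < a ∧ ∀ n, a ≤ ‖x n‖)
    (hup : ∃ b : ℝ, ∀ n, ‖x n‖ ≤ b)
    (hnull : ∀ v : X, Tendsto (fun n => x n v) atTop (nhds 0)) :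
    ∃ φ : ℕ → ℕ, StrictMono φ ∧
      ∃ y : ℕ → X, (∃ C : ℝ, ∀ n, ‖y n‖ ≤ C) ∧
        ∀ i j, x (φ i) (y j) = if i = j then 1 else 0 := by
  classical
  obtain ⟨a, ha, hlow'⟩ := hlow
  obtain ⟨b, hb⟩ := hup
  set ch : ℕ → ℕ × X := jrChain x ha hlow' hb hnull with hch
  set φ : ℕ → ℕ := fun j => (ch j).1 with hφ
  set u : ℕ → X := fun j => (ch j).2 with hu
  have spec := jrChain_spec x ha hlow' hb hnull
  have hmono : StrictMono φ := by
    apply strictMono_nat_of_lt_succ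
    intro j
    exact lt_of_le_of_lt (Finset.le_sup (f := fun i : Fin (j+1) => (ch i).1)
      (Finset.mem_univ ⟨j, Nat.lt_succ_self j⟩)) ((spec (j+1)).1)
  have P1 : ∀ j, x (φ j) (u j) = 1 := fun j => (spec j).2.1
  have P2 : ∀ j, ‖u j‖ ≤ 5 / a := fun j => (spec j).2.2.1
  have P3 : ∀ i j, i < j → x (φ i) (u j) = 0 := by
    intro i j hij
    exact (spec j).2.2.2.1 (φ i) (Finset.mem_image.2 ⟨⟨i, hij⟩, Finset.mem_univ _, rfl⟩)
  have P4 : ∀ j k, k < j → ‖x (φ j) (u k)‖ ≤ (4:ℝ)⁻¹ ^ j / 4 := by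
    intro j k hk
    have h := (spec j).2.2.2.2 k hk
    simpa only [dif_pos hk] using h
  set A : ℕ → ℕ → ℂ := fun i k => x (φ i) (u k) with hA
  have hd : ∀ i, A i i = 1 := P1
  have hup0 : ∀ i k, i < k → A i k = 0 := P3
  have hsm : ∀ i k, k < i → ‖A i k‖ ≤ (4:ℝ)⁻¹ ^ i / 4 := fun i k h => P4 i k h
  have hgeo : Summable (fun k : ℕ => (5 / a) * (2:ℝ)⁻¹ ^ k) :=
    (summable_geometric_of_lt_one (by norm_num) (by norm_num)).mul_left _
  have hM : ∀ j, Summable (fun k : ℕ => (5 / a) * (2:ℝ)⁻¹ ^ k + (if k = j then 5 / a else 0)) :=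
    fun j => hgeo.add (hasSum_ite_eq j (5 / a)).summable
  have hptw : ∀ j k, ‖jrC A k j • u k‖ ≤
      (5 / a) * (2:ℝ)⁻¹ ^ k + (if k = j then 5 / a else 0) := by
    intro j k
    rw [norm_smul]
    by_cases hkj : k = j
    · subst hkj
      rw [jrC_diag, norm_one, one_mul, if_pos rfl]
      have h0 : (0:ℝ) ≤ 5 / a * 2⁻¹ ^ k := by positivity
      linarith [P2 k]
    · rw [if_neg hkj]
      have h1 : ‖jrC A k j‖ * ‖u k‖ ≤ (2:ℝ)⁻¹ ^ k * (5 / a) :=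
        mul_le_mul (jrC_bound' A hsm k j hkj) (P2 k) (norm_nonneg _) (by positivity)
      calc ‖jrC A k j‖ * ‖u k‖ ≤ (2:ℝ)⁻¹ ^ k * (5 / a) := h1
        _ = (5 / a) * (2:ℝ)⁻¹ ^ k + 0 := by ring
        _ ≤ _ := by norm_num
  have hns : ∀ j, Summable (fun k => ‖jrC A k j • u k‖) := fun j =>
    Summable.of_nonneg_of_le (fun k => norm_nonneg _) (hptw j) (hM j)
  have hsummable : ∀ j, Summable (fun k => jrC A k j • u k) := fun j => (hns j).of_norm
  set y : ℕ → X := fun j => ∑' k, jrC A k j • u k with hy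
  refine ⟨φ, hmono, y, ⟨15 / a, ?_⟩, ?_⟩
  · intro j
    have htsumM : ∑' k : ℕ, ((5 / a) * (2:ℝ)⁻¹ ^ k + (if k = j then 5 / a else 0)) = 15 / a := by
      rw [Summable.tsum_add hgeo (hasSum_ite_eq j (5 / a)).summable, tsum_mul_left,
        tsum_geometric_of_lt_one (by norm_num) (by norm_num), tsum_ite_eq]
      norm_num
      ring
    calc ‖y j‖ ≤ ∑' k, ‖jrC A k j • u k‖ := norm_tsum_le_tsum_norm (hns j)
      _ ≤ ∑' k : ℕ, ((5 / a) * (2:ℝ)⁻¹ ^ k + (if k = j then 5 / a else 0)) :=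
          Summable.tsum_le_tsum (hptw j) (hns j) (hM j)
      _ = 15 / a := htsumM
  · intro i j
    have h1 : x (φ i) (y j) = ∑' k, x (φ i) (jrC A k j • u k) :=
      ContinuousLinearMap.map_tsum _ (hsummable j)
    have h2 : ∀ k, x (φ i) (jrC A k j • u k) = A i k * jrC A k j := by
      intro k
      calc x (φ i) (jrC A k j • u k) = jrC A k j * x (φ i) (u k) := by
            rw [map_smul, smul_eq_mul]
        _ = A i k * jrC A k j := mul_comm _ _
    have h3 : ∑' k, (A i k * jrC A k j) = ∑ k ∈ Finset.range (i+1), A i k * jrC A k j := by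
      refine tsum_eq_sum ?_
      intro k hk
      have hik : i < k := by
        rw [Finset.mem_range] at hk
        omega
      rw [hup0 i k hik, zero_mul]
    rw [h1, tsum_congr h2, h3, jrC_sum A hd i j]
end

section
/- Let X be a complex Banach space, T a bounded linear operator on X, Y a half-space of X, and k a natural number. Then there exists a finite-dimensional subspace E of X with dim E ≤ k and T(Y) ⊆ Y + E if and only if there exists a bounded operator F on X of rank at most k such that (T + F)(Y) ⊆ Y. -/
/-- A half-space `Y` is almost-invariant for `T` with defect at most `k` if and only
if `Y` is invariant for some rank at most `k` perturbation `T + F` of `T`. -/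
theorem almost_invariant_iff_perturbation_invariant
    (X : Type*) [NormedAddCommGroup X] [NormedSpace ℂ X] [CompleteSpace X]
    (T : X →L[ℂ] X) (Y : Submodule ℂ X)
    (hYclosed : IsClosed (Y : Set X))
    (hYinf : ¬ FiniteDimensional ℂ Y)
    (hYcoinf : ¬ FiniteDimensional ℂ (X ⧸ Y))
    (k : ℕ) :
    (∃ E : Submodule ℂ X, FiniteDimensional ℂ E ∧ Module.finrank ℂ E ≤ k ∧
        ∀ y ∈ Y, T y ∈ Y ⊔ E) ↔
    (∃ F : X →L[ℂ] X, Module.rank ℂ (LinearMap.range (F : X →ₗ[ℂ] X)) ≤ k ∧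
        ∀ y ∈ Y, (T + F) y ∈ Y) := by
  haveI : IsClosed (Y : Set X) := hYclosed
  constructor
  · rintro ⟨E, hEfin, hEk, hTE⟩
    -- continuous quotient map
    let Qc : X →L[ℂ] X ⧸ Y :=
      Y.mkQ.mkContinuous 1 (fun x => by
        simpa using Submodule.Quotient.norm_mk_le Y x)
    have hQc : ∀ x : X, Qc x = Y.mkQ x := fun x => rfl
    -- image of E in the quotient
    let W : Submodule ℂ (X ⧸ Y) := E.map Y.mkQ
    haveI : FiniteDimensional ℂ W := Module.Finite.map E Y.mkQ
    have hWk : Module.finrank ℂ W ≤ k := (Submodule.finrank_map_le Y.mkQ E).trans hEk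
    set n := Module.finrank ℂ W with hn
    have hnk : n ≤ k := hWk
    let b : Module.Basis (Fin n) ℂ W := Module.finBasis ℂ W
    -- lifts of basis vectors to E
    have hlift : ∀ i : Fin n, ∃ e : X, e ∈ E ∧ Y.mkQ e = (b i : X ⧸ Y) := fun i => by
      have : (b i : X ⧸ Y) ∈ W := (b i).2
      rcases this with ⟨e, he, hee⟩
      exact ⟨e, he, hee⟩
    choose e he hbe using hlift
    -- continuous coordinate functionals extended to the quotient
    have hcoord : ∀ i : Fin n, ∃ g : (X ⧸ Y) →L[ℂ] ℂ,
        ∀ w : W, g w = b.coord i w := fun i => by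
      obtain ⟨g, hg, -⟩ := exists_extension_norm_eq (𝕜 := ℂ) W
        (LinearMap.toContinuousLinearMap (b.coord i))
      exact ⟨g, fun w => hg w⟩
    choose g hg using hcoord
    -- the perturbation
    refine ⟨-∑ i, ((g i).comp (Qc.comp T)).smulRight (e i), ?_, ?_⟩
    · -- rank bound
      have hrange : LinearMap.range ((-∑ i, ((g i).comp (Qc.comp T)).smulRight (e i) :
          X →L[ℂ] X) : X →ₗ[ℂ] X) ≤ Submodule.span ℂ (Set.range e) := by
        rintro x ⟨v, rfl⟩
        simp only [ContinuousLinearMap.coe_coe, ContinuousLinearMap.neg_apply,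
          ContinuousLinearMap.sum_apply, ContinuousLinearMap.smulRight_apply]
        refine neg_mem (Submodule.sum_mem _ fun i _ => ?_)
        exact Submodule.smul_mem _ _ (Submodule.subset_span ⟨i, rfl⟩)
      classical
      refine (Submodule.rank_mono hrange).trans ?_
      have hset : Set.range e = ((Finset.univ.image e : Finset X) : Set X) := by
        simp
      rw [hset]
      refine (rank_span_finset_le _).trans ?_
      have hcard : (Finset.univ.image e).card ≤ n :=
        (Finset.card_image_le).trans (by simp)
      exact_mod_cast Nat.cast_le.mpr (hcard.trans hnk)
    · -- invariance
      intro y hy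
      have hTy : Y.mkQ (T y) ∈ W := by
        rcases Submodule.mem_sup.mp (hTE y hy) with ⟨a, ha, c, hc, hac⟩
        have : Y.mkQ (T y) = Y.mkQ c := by
          rw [← hac]; simp [Submodule.Quotient.mk_eq_zero, ha,
            (Submodule.Quotient.mk_eq_zero Y).2 ha]
        exact this ▸ ⟨c, hc, rfl⟩
      set w : W := ⟨Y.mkQ (T y), hTy⟩ with hw
      rw [← Submodule.Quotient.mk_eq_zero Y]
      have key : Y.mkQ ((T + -∑ i, ((g i).comp (Qc.comp T)).smulRight (e i)) y) = 0 := by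
        simp only [ContinuousLinearMap.add_apply, ContinuousLinearMap.neg_apply,
          ContinuousLinearMap.sum_apply, ContinuousLinearMap.smulRight_apply,
          ContinuousLinearMap.comp_apply, map_add, map_neg, map_sum, map_smul]
        have h1 : ∀ i, Y.mkQ (e i) = (b i : X ⧸ Y) := hbe
        have h2 : ∀ i, g i (Qc (T y)) = b.coord i w := by
          intro i
          have := hg i w
          rwa [show ((w : X ⧸ Y)) = Qc (T y) from rfl] at this
        rw [show (∑ i, g i (Qc (T y)) • Y.mkQ (e i)) =
            ∑ i, (b.coord i w : ℂ) • ((b i : W) : X ⧸ Y) by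
          refine Finset.sum_congr rfl fun i _ => ?_
          rw [h1 i, h2 i]]
        have : (∑ i, (b.coord i w : ℂ) • (b i : W)) = w := by
          simpa [Module.Basis.coord_apply] using b.sum_repr w
        have hsum : (∑ i, (b.coord i w : ℂ) • ((b i : W) : X ⧸ Y)) = (w : X ⧸ Y) := by
          calc (∑ i, (b.coord i w : ℂ) • ((b i : W) : X ⧸ Y))
              = ((∑ i, (b.coord i w : ℂ) • (b i : W) : W) : X ⧸ Y) := by
                push_cast [Submodule.coe_sum]; rfl
            _ = (w : X ⧸ Y) := by rw [this]
        rw [hsum]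
        simp [hw]
      exact key
  · rintro ⟨F, hFk, hF⟩
    have hlt : Module.rank ℂ (LinearMap.range (F : X →ₗ[ℂ] X)) < Cardinal.aleph0 :=
      hFk.trans_lt (Cardinal.nat_lt_aleph0 k)
    haveI hfin : FiniteDimensional ℂ (LinearMap.range (F : X →ₗ[ℂ] X)) :=
      Module.rank_lt_aleph0_iff.mp hlt
    refine ⟨LinearMap.range (F : X →ₗ[ℂ] X), hfin, ?_, ?_⟩
    · exact Module.finrank_le_of_rank_le hFk
    · intro y hy
      have h1 : (T + F) y ∈ Y := hF y hy
      have h2 : T y = (T + F) y + -(F y) := by simp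
      rw [h2]
      exact Submodule.add_mem _ (Submodule.mem_sup_left h1)
        (Submodule.mem_sup_right (neg_mem ⟨y, rfl⟩))
end

section
/- Let X be a complex Banach space and T a bounded linear operator on X. Suppose there is an infinite set Λ of complex numbers such that every λ ∈ Λ is simultaneously an eigenvalue of T and an eigenvalue of the adjoint T*. Then T has an invariant half-space, i.e., a closed subspace of infinite dimension and infinite codimension that T maps into itself. -/
/-- If infinitely many complex numbers are simultaneously eigenvalues of `T` and of
its Banach-space adjoint `T*`, then `T` itself has an invariant half-space. -/
theorem invariant_halfspace_of_infinitely_many_common_eigenvalues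
    (X : Type*) [NormedAddCommGroup X] [NormedSpace ℂ X] [CompleteSpace X]
    (T : X →L[ℂ] X) (Λ : Set ℂ) (hΛ : Λ.Infinite)
    (heig : ∀ l ∈ Λ, (∃ x : X, x ≠ 0 ∧ T x = l • x) ∧
      (∃ f : StrongDual ℂ X, f ≠ 0 ∧ f.comp T = l • f)) :
    ∃ Y : Submodule ℂ X, IsClosed (Y : Set X) ∧
      ¬ FiniteDimensional ℂ Y ∧ ¬ FiniteDimensional ℂ (X ⧸ Y) ∧
      ∀ y ∈ Y, T y ∈ Y := by
  classical
  -- pick countably many distinct eigenvalues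
  set e := hΛ.natEmbedding with he
  set l : ℕ → ℂ := fun n => (e n : ℂ) with hl
  have hlinj : Function.Injective l := fun m n h => e.injective (Subtype.ext h)
  have hlmem : ∀ n, l n ∈ Λ := fun n => (e n).2
  choose x hx0 hTx using fun n => (heig (l n) (hlmem n)).1
  choose f hf0 hTf using fun n => (heig (l n) (hlmem n)).2
  -- eigenvectors and eigenfunctionals
  have hEig : ∀ n, Module.End.HasEigenvector (T : X →ₗ[ℂ] X) (l n) (x n) := by
    intro n
    refine ⟨Module.End.mem_eigenspace_iff.mpr ?_, hx0 n⟩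
    exact hTx n
  -- the adjoint as an algebraic endomorphism of the dual
  set A : Module.End ℂ (StrongDual ℂ X) :=
    { toFun := fun g => g.comp T
      map_add' := fun g h => ContinuousLinearMap.add_comp _ _ _
      map_smul' := fun c g => ContinuousLinearMap.smul_comp _ _ _ } with hA
  have hEigF : ∀ n, Module.End.HasEigenvector A (l n) (f n) := by
    intro n
    refine ⟨Module.End.mem_eigenspace_iff.mpr ?_, hf0 n⟩
    exact hTf n
  -- key orthogonality
  have horth : ∀ m n : ℕ, l m ≠ l n → f n (x m) = 0 := by
    intro m n hne
    have h1 : f n (T (x m)) = l m * f n (x m) := by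
      rw [hTx m, map_smul]; rfl
    have h2 : f n (T (x m)) = l n * f n (x m) := by
      have := congrArg (fun g : StrongDual ℂ X => g (x m)) (hTf n)
      simpa using this
    have h3 : f n (x m) * (l m - l n) = 0 := by
      linear_combination h2 - h1
    rcases mul_eq_zero.mp h3 with h | h
    · exact h
    · exact absurd (sub_eq_zero.mp h) hne
  set S : Submodule ℂ X := Submodule.span ℂ (Set.range fun n : ℕ => x (2 * n)) with hS
  set Y : Submodule ℂ X := S.topologicalClosure with hY
  have hSY : S ≤ Y := Submodule.le_topologicalClosure S
  refine ⟨Y, Submodule.isClosed_topologicalClosure S, ?_, ?_, ?_⟩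
  · -- Y infinite dimensional
    intro hfin
    have hli : LinearIndependent ℂ fun n : ℕ => x (2 * n) :=
      Module.End.eigenvectors_linearIndependent' (T : X →ₗ[ℂ] X) (fun n => l (2 * n))
        (fun a b h => by have := hlinj h; omega) _
        (fun n => hEig (2 * n))
    have hliY : LinearIndependent ℂ
        (fun n : ℕ => (⟨x (2 * n), hSY (Submodule.subset_span ⟨n, rfl⟩)⟩ : Y)) := by
      apply LinearIndependent.of_comp Y.subtype
      exact hli
    have hcard := hliY.lt_aleph0_of_finiteDimensional
    simp at hcard
  · -- quotient infinite dimensional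
    intro hfin
    have hker : ∀ n : ℕ, Y ≤ LinearMap.ker ((f (2 * n + 1) : X →ₗ[ℂ] ℂ)) := by
      intro n
      apply Submodule.topologicalClosure_minimal
      · rw [hS, Submodule.span_le]
        rintro _ ⟨m, rfl⟩
        have hne : l (2 * m) ≠ l (2 * n + 1) := fun h => by
          have := hlinj h; omega
        simpa [LinearMap.mem_ker] using horth (2 * m) (2 * n + 1) hne
      · exact ContinuousLinearMap.isClosed_ker (f (2 * n + 1))
    set g : ℕ → Module.Dual ℂ (X ⧸ Y) :=
      fun n => Y.liftQ ((f (2 * n + 1) : X →ₗ[ℂ] ℂ)) (hker n) with hg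
    have hliF : LinearIndependent ℂ fun n : ℕ => f (2 * n + 1) :=
      Module.End.eigenvectors_linearIndependent' A (fun n => l (2 * n + 1))
        (fun a b h => by have := hlinj h; omega) _ (fun n => hEigF (2 * n + 1))
    have hliF' : LinearIndependent ℂ
        fun n : ℕ => ((f (2 * n + 1) : X →ₗ[ℂ] ℂ)) :=
      hliF.map' (ContinuousLinearMap.coeLM ℂ)
        (LinearMap.ker_eq_bot.mpr (fun a b hab => ContinuousLinearMap.coe_injective hab))
    have hlig : LinearIndependent ℂ g := by
      apply LinearIndependent.of_comp (Y.mkQ.dualMap)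
      have hcomp : (Y.mkQ.dualMap ∘ g) = fun n : ℕ => ((f (2 * n + 1) : X →ₗ[ℂ] ℂ)) := by
        funext n
        exact Y.liftQ_mkQ _ (hker n)
      rw [hcomp]
      exact hliF'
    have hcard := hlig.lt_aleph0_of_finiteDimensional
    simp at hcard
  · -- invariance
    have hcomap : S ≤ Y.comap (T : X →ₗ[ℂ] X) := by
      rw [hS, Submodule.span_le]
      rintro _ ⟨n, rfl⟩
      have hmem : T (x (2 * n)) ∈ Y := by
        rw [hTx]
        exact Y.smul_mem _ (hSY (Submodule.subset_span ⟨n, rfl⟩))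
      simpa [Submodule.mem_comap] using hmem
    have hclosed : IsClosed ((Y.comap (T : X →ₗ[ℂ] X) : Submodule ℂ X) : Set X) :=
      (Submodule.isClosed_topologicalClosure S).preimage T.continuous
    intro y hy
    exact Submodule.topologicalClosure_minimal S hcomap hclosed hy
end

section
/- Let X be a complex Banach space and T a bounded linear operator on X that is locally algebraic, i.e., for every x ∈ X there exists a nonzero polynomial p_x with complex coefficients such that p_x(T)x = 0. Then T is algebraic: there exists a nonzero polynomial p such that p(T) = 0. -/
open Polynomial

section KaplanskyAux

variable {X : Type*} [NormedAddCommGroup X] [NormedSpace ℂ X] [CompleteSpace X]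

/-- The annihilator ideal of a vector. -/
noncomputable def annIdeal (T : X →L[ℂ] X) (x : X) : Ideal (Polynomial ℂ) where
  carrier := {p | (Polynomial.aeval T p) x = 0}
  add_mem' := by
    intro a b ha hb
    simp only [Set.mem_setOf_eq] at *
    rw [map_add, ContinuousLinearMap.add_apply, ha, hb, add_zero]
  zero_mem' := by simp
  smul_mem' := by
    intro c p hp
    simp only [Set.mem_setOf_eq, smul_eq_mul] at *
    rw [map_mul, ContinuousLinearMap.mul_apply, hp, map_zero]

lemma mem_annIdeal_iff {T : X →L[ℂ] X} {x : X} {p : Polynomial ℂ} :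
    p ∈ annIdeal T x ↔ (Polynomial.aeval T p) x = 0 := Iff.rfl

/-- Evaluating a polynomial in `T` at a vector, as a finite sum. -/
lemma aeval_apply_eq_sum {T : X →L[ℂ] X} {p : Polynomial ℂ} {n : ℕ}
    (hn : p.natDegree < n) (x : X) :
    (Polynomial.aeval T p) x = ∑ i ∈ Finset.range n, p.coeff i • (T ^ i) x := by
  rw [Polynomial.aeval_eq_sum_range' hn]
  rw [ContinuousLinearMap.sum_apply]
  exact Finset.sum_congr rfl fun i _ => rfl

lemma mem_S_iff (T : X →L[ℂ] X) (n : ℕ) (x : X) :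
    (¬ LinearIndependent ℂ (fun i : Fin (n + 1) => (T ^ (i : ℕ)) x)) ↔
      ∃ p : Polynomial ℂ, p ≠ 0 ∧ p.natDegree ≤ n ∧ (Polynomial.aeval T p) x = 0 := by
  constructor
  · intro hld
    obtain ⟨g, hsum, i0, hi0⟩ := Fintype.not_linearIndependent_iff.1 hld
    refine ⟨∑ i : Fin (n + 1), Polynomial.C (g i) * Polynomial.X ^ (i : ℕ), ?_, ?_, ?_⟩
    · intro hzero
      apply hi0
      have hcoeff : (∑ i : Fin (n + 1), Polynomial.C (g i) * Polynomial.X ^ (i : ℕ)).coeff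
          (i0 : ℕ) = g i0 := by
        rw [Polynomial.finset_sum_coeff]
        rw [Finset.sum_eq_single i0]
        · simp
        · intro j _ hj
          rw [Polynomial.coeff_C_mul, Polynomial.coeff_X_pow, if_neg, mul_zero]
          exact fun hc => hj (Fin.ext hc.symm)
        · simp
      rw [hzero] at hcoeff
      simpa using hcoeff.symm
    · apply Polynomial.natDegree_sum_le_of_forall_le
      intro i _
      exact (Polynomial.natDegree_C_mul_X_pow_le (g i) (i : ℕ)).trans
        (Nat.lt_succ_iff.mp i.isLt)
    · rw [map_sum, ContinuousLinearMap.sum_apply]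
      rw [← hsum]
      refine Finset.sum_congr rfl fun i _ => ?_
      rw [map_mul, Polynomial.aeval_C, map_pow, Polynomial.aeval_X]
      rw [ContinuousLinearMap.mul_apply]
      simp [Algebra.algebraMap_eq_smul_one]
  · rintro ⟨p, hp0, hpn, hpx⟩ hli
    have hsum : ∑ i : Fin (n + 1), p.coeff (i : ℕ) • (T ^ (i : ℕ)) x = 0 := by
      rw [Fin.sum_univ_eq_sum_range (fun i => p.coeff i • (T ^ i) x) (n + 1)]
      rw [← aeval_apply_eq_sum (Nat.lt_succ_of_le hpn)]
      exact hpx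
    have hall := Fintype.linearIndependent_iff.1 hli (fun i => p.coeff (i : ℕ)) hsum
    apply hp0
    ext k
    by_cases hk : k ≤ n
    · simpa using hall ⟨k, Nat.lt_succ_of_le hk⟩
    · simp [Polynomial.coeff_eq_zero_of_natDegree_lt
        (lt_of_le_of_lt hpn (Nat.lt_of_not_le hk))]

end KaplanskyAux

/-- **Kaplansky's lemma for bounded operators.** If every vector is annihilated by
some nonzero polynomial in `T` (i.e. `T` is locally algebraic), then `T` is
algebraic: some nonzero polynomial in `T` is the zero operator. -/
theorem algebraic_of_locally_algebraic
    (X : Type*) [NormedAddCommGroup X] [NormedSpace ℂ X] [CompleteSpace X]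
    (T : X →L[ℂ] X)
    (h : ∀ x : X, ∃ p : Polynomial ℂ, p ≠ 0 ∧ (Polynomial.aeval T p) x = 0) :
    ∃ p : Polynomial ℂ, p ≠ 0 ∧ Polynomial.aeval T p = 0 := by
  classical
  -- The closed sets of vectors annihilated by a polynomial of degree at most `n`
  set S : ℕ → Set X :=
    fun n => {x | ¬ LinearIndependent ℂ (fun i : Fin (n + 1) => (T ^ (i : ℕ)) x)} with hS
  have hSclosed : ∀ n, IsClosed (S n) := by
    intro n
    have hcont : Continuous (fun x : X => fun i : Fin (n + 1) => (T ^ (i : ℕ)) x) :=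
      continuous_pi fun i => (T ^ (i : ℕ)).continuous
    have := (isOpen_setOf_linearIndependent (𝕜 := ℂ) (E := X)
      (ι := Fin (n + 1))).preimage hcont
    exact isClosed_compl_iff.mpr this |>.mono (by rfl) |>.mono (by rfl)
  have hcover : (⋃ n, S n) = Set.univ := by
    apply Set.eq_univ_of_forall
    intro x
    obtain ⟨p, hp0, hpx⟩ := h x
    exact Set.mem_iUnion.2 ⟨p.natDegree, (mem_S_iff T p.natDegree x).2 ⟨p, hp0, le_rfl, hpx⟩⟩
  obtain ⟨n, hn⟩ := nonempty_interior_of_iUnion_of_closed hSclosed hcover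
  obtain ⟨x₀, hx₀⟩ := hn
  obtain ⟨r, hr, hball⟩ := Metric.isOpen_iff.1 isOpen_interior x₀ hx₀
  have hballS : Metric.ball x₀ r ⊆ S n := hball.trans interior_subset
  -- Every vector is annihilated by a nonzero polynomial of degree at most `2 * n`
  have key : ∀ y : X, ∃ p : Polynomial ℂ, p ≠ 0 ∧ p.natDegree ≤ 2 * n ∧
      (Polynomial.aeval T p) y = 0 := by
    intro y
    by_cases hy : y = 0
    · exact ⟨1, one_ne_zero, by simp, by simp [hy]⟩
    · have hny : (0 : ℝ) < ‖y‖ := norm_pos_iff.2 hy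
      set ε : ℝ := r / (2 * ‖y‖) with hε
      have hεpos : 0 < ε := by positivity
      have hmem : x₀ + (ε : ℂ) • y ∈ Metric.ball x₀ r := by
        rw [Metric.mem_ball, dist_eq_norm]
        have : x₀ + (ε : ℂ) • y - x₀ = (ε : ℂ) • y := by abel
        rw [this, norm_smul]
        have : ‖(ε : ℂ)‖ = ε := by
          rw [Complex.norm_real, Real.norm_of_nonneg hεpos.le]
        rw [this, hε]
        rw [div_mul_eq_mul_div, mul_comm 2 ‖y‖, ← div_div]
        rw [mul_div_assoc, div_self hny.ne']
        linarith
      obtain ⟨p, hp0, hpn, hpx⟩ := (mem_S_iff T n _).1 (hballS hmem)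
      obtain ⟨q, hq0, hqn, hqx⟩ := (mem_S_iff T n _).1 (hballS (Metric.mem_ball_self hr))
      refine ⟨p * q, mul_ne_zero hp0 hq0, ?_, ?_⟩
      · calc (p * q).natDegree ≤ p.natDegree + q.natDegree := Polynomial.natDegree_mul_le
          _ ≤ 2 * n := by omega
      · have h1 : (Polynomial.aeval T (p * q)) (x₀ + (ε : ℂ) • y) = 0 := by
          rw [mul_comm, map_mul, ContinuousLinearMap.mul_apply, hpx, map_zero]
        have h2 : (Polynomial.aeval T (p * q)) x₀ = 0 := by
          rw [map_mul, ContinuousLinearMap.mul_apply, hqx, map_zero]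
        have h3 : (Polynomial.aeval T (p * q)) (x₀ + (ε : ℂ) • y)
            = (Polynomial.aeval T (p * q)) x₀
              + (ε : ℂ) • (Polynomial.aeval T (p * q)) y := by
          rw [map_add, map_smul]
        rw [h1, h2, zero_add] at h3
        have hε0 : (ε : ℂ) ≠ 0 := by
          simpa using hεpos.ne'
        exact (smul_eq_zero.1 h3.symm).resolve_left hε0
  -- Local minimal polynomials
  haveI : ∀ y : X, (annIdeal T y).IsPrincipal := fun y => IsPrincipalIdealRing.principal _
  set g : X → Polynomial ℂ :=
    fun y => normalize (Submodule.IsPrincipal.generator (annIdeal T y)) with hgdef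
  have hgen0 : ∀ y : X, Submodule.IsPrincipal.generator (annIdeal T y) ≠ 0 := by
    intro y hzero
    obtain ⟨p, hp0, hpy⟩ := h y
    have hbot : annIdeal T y = ⊥ :=
      (Submodule.IsPrincipal.eq_bot_iff_generator_eq_zero _).2 hzero
    have hmem : p ∈ annIdeal T y := hpy
    rw [hbot] at hmem
    exact hp0 (Submodule.mem_bot _ |>.1 hmem)
  have hg0 : ∀ y : X, g y ≠ 0 := fun y => by
    simp only [hgdef, ne_eq, normalize_eq_zero]
    exact hgen0 y
  have hgmonic : ∀ y : X, (g y).Monic := fun y => Polynomial.monic_normalize (hgen0 y)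
  have hgmem : ∀ y : X, (Polynomial.aeval T (g y)) y = 0 := by
    intro y
    have : g y ∈ annIdeal T y := by
      show normalize (Submodule.IsPrincipal.generator (annIdeal T y)) ∈ annIdeal T y
      rw [normalize_apply]
      exact Ideal.mul_mem_right _ _ (Submodule.IsPrincipal.generator_mem _)
    exact this
  have hgdvd : ∀ (y : X) (q : Polynomial ℂ), (Polynomial.aeval T q) y = 0 → g y ∣ q := by
    intro y q hq
    show normalize (Submodule.IsPrincipal.generator (annIdeal T y)) ∣ q
    rw [normalize_dvd_iff]
    exact (Submodule.IsPrincipal.mem_iff_generator_dvd _).1 hq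
  have hgdeg : ∀ y : X, (g y).natDegree ≤ 2 * n := by
    intro y
    obtain ⟨p, hp0, hpn, hpy⟩ := key y
    exact (Polynomial.natDegree_le_of_dvd (hgdvd y p hpy) hp0).trans hpn
  -- Choose a vector with maximal local minimal polynomial degree
  set D : Set ℕ := Set.range (fun y : X => (g y).natDegree) with hD
  have hDbdd : BddAbove D := ⟨2 * n, by rintro k ⟨y, rfl⟩; exact hgdeg y⟩
  have hDne : D.Nonempty := ⟨(g 0).natDegree, ⟨0, rfl⟩⟩
  have hdmem : sSup D ∈ D := Nat.sSup_mem hDne hDbdd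
  obtain ⟨x, hx⟩ := hdmem
  have hmax : ∀ y : X, (g y).natDegree ≤ (g x).natDegree := by
    intro y
    have hx' : (g x).natDegree = sSup D := hx
    rw [hx']
    exact le_csSup hDbdd ⟨y, rfl⟩
  -- Claim: `g x` annihilates everything
  refine ⟨g x, hg0 x, ?_⟩
  ext y
  rw [ContinuousLinearMap.zero_apply]
  -- The family of minimal polynomials of `x + λ • y`
  set L : Polynomial ℂ := g x * g y with hL
  have hL0 : L ≠ 0 := mul_ne_zero (hg0 x) (hg0 y)
  have hLdvd : ∀ c : ℂ, g (x + c • y) ∣ L := by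
    intro c
    apply hgdvd
    have hx0 : (Polynomial.aeval T L) x = 0 := by
      rw [hL, mul_comm, map_mul, ContinuousLinearMap.mul_apply, hgmem x, map_zero]
    have hy0 : (Polynomial.aeval T L) y = 0 := by
      rw [hL, map_mul, ContinuousLinearMap.mul_apply, hgmem y, map_zero]
    rw [map_add, map_smul, hx0, hy0, smul_zero, add_zero]
  -- Pigeonhole on roots
  have hmapsto : Set.MapsTo (fun c : ℂ => (g (x + c • y)).roots) Set.univ
      {s : Multiset ℂ | s ≤ L.roots} := by
    intro c _
    exact Polynomial.roots.le_of_dvd hL0 (hLdvd c)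
  have hfin : {s : Multiset ℂ | s ≤ L.roots}.Finite := by
    have : {s : Multiset ℂ | s ≤ L.roots} = {s : Multiset ℂ | s ∈ L.roots.powerset} := by
      ext s; exact (Multiset.mem_powerset).symm
    rw [this]
    exact L.roots.powerset.finite_toSet
  obtain ⟨c₁, -, c₂, -, hcne, hceq⟩ :=
    Set.infinite_univ.exists_ne_map_eq_of_mapsTo hmapsto hfin
  -- The two minimal polynomials coincide
  have hq_eq : g (x + c₁ • y) = g (x + c₂ • y) := by
    rw [(IsAlgClosed.splits (g (x + c₁ • y))).eq_prod_roots_of_monic (hgmonic _),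
      (IsAlgClosed.splits (g (x + c₂ • y))).eq_prod_roots_of_monic (hgmonic (x + c₂ • y))]
    rw [hceq]
  set q : Polynomial ℂ := g (x + c₁ • y) with hq
  have h1 : (Polynomial.aeval T q) x + c₁ • (Polynomial.aeval T q) y = 0 := by
    have := hgmem (x + c₁ • y)
    rwa [← hq, map_add, map_smul] at this
  have h2 : (Polynomial.aeval T q) x + c₂ • (Polynomial.aeval T q) y = 0 := by
    have := hgmem (x + c₂ • y)
    rwa [← hq_eq, map_add, map_smul] at this
  have hqy : (Polynomial.aeval T q) y = 0 := by
    have hsub : (c₁ - c₂) • (Polynomial.aeval T q) y = 0 := by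
      have h3 : ((Polynomial.aeval T q) x + c₁ • (Polynomial.aeval T q) y) -
          ((Polynomial.aeval T q) x + c₂ • (Polynomial.aeval T q) y) = 0 := by
        rw [h1, h2, sub_zero]
      rw [sub_smul, ← h3]
      abel
    exact (smul_eq_zero.1 hsub).resolve_left (sub_ne_zero.2 hcne)
  have hqx : (Polynomial.aeval T q) x = 0 := by
    have h1' := h1
    rw [hqy, smul_zero, add_zero] at h1'
    exact h1'
  -- `q` divides by maximality equals `g x`
  have hdvd : g x ∣ q := hgdvd x q hqx
  have hqeq : q = g x :=
    Polynomial.eq_of_monic_of_dvd_of_natDegree_le (hgmonic x) (hgmonic _) hdvd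
      (hmax (x + c₁ • y))
  rw [← hqeq]
  exact hqy
end

section
/- Let W be a complex Banach space and A a bounded linear operator on W such that dim ker(A^n) = n for every natural number n ≥ 1. Let Z be the closed linear span of the union ⋃_{n≥1} ker(A^n). Then Z is an infinite-dimensional, separable, closed subspace of W that is invariant under A, and the restriction A|_Z : Z → Z has dense range. -/
open Submodule TopologicalSpace Set

/-- If `dim ker(Aⁿ) = n` for every `n ≥ 1`, then the closed linear span `Z` of
`⋃_{n ≥ 1} ker(Aⁿ)` is an infinite-dimensional, separable, closed subspace of `W`,
invariant under `A`, and the restriction `A|_Z : Z → Z` has dense range. -/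
theorem closed_span_of_kernels_invariant_dense_range
    (W : Type*) [NormedAddCommGroup W] [NormedSpace ℂ W] [CompleteSpace W]
    (A : W →L[ℂ] W)
    (h : ∀ n : ℕ, 1 ≤ n → Module.finrank ℂ (LinearMap.ker ((A ^ n : W →L[ℂ] W) : W →ₗ[ℂ] W)) = n)
    (Z : Submodule ℂ W)
    (hZ : Z = (Submodule.span ℂ
      (⋃ n : ℕ, ((LinearMap.ker ((A ^ (n + 1) : W →L[ℂ] W) : W →ₗ[ℂ] W) : Submodule ℂ W) : Set W))).topologicalClosure) :
    IsClosed (Z : Set W) ∧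
    ¬ FiniteDimensional ℂ Z ∧
    TopologicalSpace.IsSeparable (Z : Set W) ∧
    (∀ z ∈ Z, A z ∈ Z) ∧
    (Z : Set W) ⊆ closure (⇑A '' (Z : Set W)) := by
  set U : Set W := ⋃ n : ℕ, ((LinearMap.ker ((A ^ (n + 1) : W →L[ℂ] W) : W →ₗ[ℂ] W) : Submodule ℂ W) : Set W) with hU
  set S : Submodule ℂ W := Submodule.span ℂ U with hS
  -- kernels of powers are monotone
  have hmono : ∀ m k : ℕ, LinearMap.ker ((A ^ m : W →L[ℂ] W) : W →ₗ[ℂ] W) ≤ LinearMap.ker ((A ^ (m + k) : W →L[ℂ] W) : W →ₗ[ℂ] W) := by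
    intro m k x hx
    have hx' : (A ^ m) x = 0 := hx
    have : (A ^ (m + k)) x = (A ^ k) ((A ^ m) x) := by
      rw [add_comm, pow_add]; rfl
    show (A ^ (m + k)) x = 0
    rw [this, hx', map_zero]
  -- the kernels are finite dimensional
  have hfd : ∀ n : ℕ, FiniteDimensional ℂ (LinearMap.ker ((A ^ (n + 1) : W →L[ℂ] W) : W →ₗ[ℂ] W)) := by
    intro n
    exact FiniteDimensional.of_finrank_pos (by rw [h (n + 1) (by omega)]; omega)
  -- each kernel is contained in S
  have hkerS : ∀ n : ℕ, LinearMap.ker ((A ^ (n + 1) : W →L[ℂ] W) : W →ₗ[ℂ] W) ≤ S := by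
    intro n x hx
    exact subset_span (mem_iUnion.2 ⟨n, hx⟩)
  -- key: ker (A^(n+1)) ≤ A (ker (A^(n+2)))
  have key : ∀ n : ℕ, LinearMap.ker ((A ^ (n + 1) : W →L[ℂ] W) : W →ₗ[ℂ] W) ≤
      Submodule.map (A : W →ₗ[ℂ] W) (LinearMap.ker ((A ^ (n + 2) : W →L[ℂ] W) : W →ₗ[ℂ] W)) := by
    intro n
    haveI := hfd n
    haveI := hfd (n + 1)
    set K2 : Submodule ℂ W := LinearMap.ker ((A ^ (n + 2) : W →L[ℂ] W) : W →ₗ[ℂ] W) with hK2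
    have hK2eq : K2 = LinearMap.ker ((A ^ ((n + 1) + 1) : W →L[ℂ] W) : W →ₗ[ℂ] W) := rfl
    haveI : FiniteDimensional ℂ K2 := hK2eq ▸ hfd (n + 1)
    set f : K2 →ₗ[ℂ] W := (A : W →ₗ[ℂ] W).domRestrict K2 with hf
    have hker1 : LinearMap.ker ((A : W →ₗ[ℂ] W)) ≤ K2 := by
      have h1 := hmono 1 (n + 1)
      intro x hx
      have : x ∈ LinearMap.ker ((A ^ 1 : W →L[ℂ] W) : W →ₗ[ℂ] W) := by
        show (A ^ 1) x = 0
        rw [pow_one]; exact hx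
      have := h1 this
      rwa [show 1 + (n + 1) = n + 2 by omega] at this
    -- rank of the kernel of the restriction
    have hkerf : Module.finrank ℂ (LinearMap.ker f) = 1 := by
      have e1 : LinearMap.ker f = Submodule.comap K2.subtype
          (LinearMap.ker ((A : W →ₗ[ℂ] W))) := LinearMap.ker_domRestrict K2 _
      have e2 := (Submodule.comapSubtypeEquivOfLe hker1).finrank_eq
      rw [e1, e2]
      have : LinearMap.ker ((A : W →ₗ[ℂ] W)) = LinearMap.ker ((A ^ 1 : W →L[ℂ] W) : W →ₗ[ℂ] W) := by
        rw [pow_one]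
      rw [this, h 1 le_rfl]
    -- rank-nullity for the restriction
    have hrn := LinearMap.finrank_range_add_finrank_ker f
    have hrangef : LinearMap.range f = Submodule.map (A : W →ₗ[ℂ] W) K2 := by
      rw [hf, LinearMap.range_domRestrict]
    have hfrK2 : Module.finrank ℂ K2 = n + 2 := h (n + 2) (by omega)
    have hfrmap : Module.finrank ℂ (Submodule.map (A : W →ₗ[ℂ] W) K2) = n + 1 := by
      rw [hrangef, hkerf, hfrK2] at hrn; omega
    -- the image lands inside ker (A^(n+1))
    have hle : Submodule.map (A : W →ₗ[ℂ] W) K2 ≤ LinearMap.ker ((A ^ (n + 1) : W →L[ℂ] W) : W →ₗ[ℂ] W) := by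
      rintro _ ⟨x, hx, rfl⟩
      have hx' : (A ^ (n + 2)) x = 0 := hx
      show (A ^ (n + 1)) (A x) = 0
      have : (A ^ (n + 2)) x = (A ^ (n + 1)) (A x) := by
        rw [pow_succ]; rfl
      rw [← this, hx']
    -- equality by dimension count
    have heq : Submodule.map (A : W →ₗ[ℂ] W) K2 = LinearMap.ker ((A ^ (n + 1) : W →L[ℂ] W) : W →ₗ[ℂ] W) := by
      apply Submodule.eq_of_le_of_finrank_le hle
      rw [hfrmap, h (n + 1) (by omega)]
    exact heq.ge
  -- A maps S into S
  have hmapS : Submodule.map (A : W →ₗ[ℂ] W) S ≤ S := by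
    have : Submodule.map (A : W →ₗ[ℂ] W) S ≤ S := by
      rw [hS, Submodule.map_span]
      apply Submodule.span_mono
      rintro _ ⟨x, hx, rfl⟩
      rcases mem_iUnion.1 hx with ⟨n, hn⟩
      have hn' : (A ^ (n + 1)) x = 0 := hn
      apply mem_iUnion.2 ⟨n, ?_⟩
      show (A ^ (n + 1)) (A x) = 0
      have : (A ^ (n + 1)) (A x) = A ((A ^ (n + 1)) x) := by
        have hc : A ^ (n + 1) * A = A * A ^ (n + 1) := (Commute.pow_self A (n + 1)).eq
        calc (A ^ (n + 1)) (A x) = (A ^ (n + 1) * A) x := rfl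
          _ = (A * A ^ (n + 1)) x := by rw [hc]
          _ = A ((A ^ (n + 1)) x) := rfl
      rw [this, hn', map_zero]
    exact this
  -- S ≤ A(S)
  have hSmap : S ≤ Submodule.map (A : W →ₗ[ℂ] W) S := by
    rw [hS, Submodule.span_le]
    intro x hx
    rcases mem_iUnion.1 hx with ⟨n, hn⟩
    rcases key n hn with ⟨y, hy, rfl⟩
    exact ⟨y, hkerS (n + 1) hy, rfl⟩
  -- Z as a set is the closure of S
  have hZc : (Z : Set W) = closure (S : Set W) := by
    rw [hZ, Submodule.topologicalClosure_coe]
  have hSZ : S ≤ Z := hZ ▸ Submodule.le_topologicalClosure S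
  refine ⟨?_, ?_, ?_, ?_, ?_⟩
  · rw [hZc]; exact isClosed_closure
  · intro hfin
    have hle : LinearMap.ker ((A ^ (Module.finrank ℂ Z + 1) : W →L[ℂ] W) : W →ₗ[ℂ] W) ≤ Z :=
      le_trans (hkerS _) hSZ
    have := Submodule.finrank_mono hle
    rw [h (Module.finrank ℂ Z + 1) (by omega)] at this
    omega
  · have hsep : IsSeparable U := by
      apply IsSeparable.iUnion
      intro n
      haveI := hfd n
      obtain ⟨s, hs⟩ := (Submodule.fg_iff_finiteDimensional
        (LinearMap.ker ((A ^ (n + 1) : W →L[ℂ] W) : W →ₗ[ℂ] W))).2 (hfd n)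
      have : ((LinearMap.ker ((A ^ (n + 1) : W →L[ℂ] W) : W →ₗ[ℂ] W) : Submodule ℂ W) : Set W) =
          (Submodule.span ℂ (s : Set W) : Set W) := by rw [hs]
      rw [this]
      exact (s.finite_toSet.isSeparable).span
    rw [hZc]
    exact hsep.span.closure
  · intro z hz
    have hz' : z ∈ closure (S : Set W) := by rw [← hZc]; exact hz
    have h1 : A z ∈ closure (⇑A '' (S : Set W)) :=
      image_closure_subset_closure_image A.continuous ⟨z, hz', rfl⟩
    have h2 : ⇑A '' (S : Set W) ⊆ (S : Set W) := by
      rintro _ ⟨x, hx, rfl⟩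
      exact hmapS ⟨x, hx, rfl⟩
    have : A z ∈ closure (S : Set W) := closure_mono h2 h1
    rw [← hZc] at this
    exact this
  · intro z hz
    have hz' : z ∈ closure (S : Set W) := by rw [← hZc]; exact hz
    have h2 : (S : Set W) ⊆ ⇑A '' (Z : Set W) := by
      intro x hx
      rcases hSmap hx with ⟨y, hy, rfl⟩
      exact ⟨y, hSZ hy, rfl⟩
    exact closure_mono h2 hz'
end
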